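/- (Null BBP formula in base 16) ∑_{k=0}^∞ (1/16^k) · ( -8/(8k+1) + 8/(8k+2) + 4/(8k+3) + 8/(8k+4) + 2/(8k+5) + 2/(8k+6) - 1/(8k+7) ) = 0. -/

import Mathlib

open Complex

private noncomputable def bbpT : ℝ := Real.sqrt 2 / 2
private noncomputable def bbpZ : ℂ := (1 + Complex.I)/2
private noncomputable def bbpF (n : ℕ) : ℝ :=
  (8 * bbpT ^ n + 8 * (-bbpT) ^ n - 16 * (bbpZ ^ n).re) / n

private lemma bbpT2 : bbpT ^ 2 = 1/2 := by
  rw [bbpT, div_pow, Real.sq_sqrt] <;> norm_num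

private lemma bbpT8 : bbpT ^ 8 = 1/16 := by
  rw [show bbpT ^ 8 = (bbpT ^ 2) ^ 4 by ring, bbpT2]; norm_num

private lemma bbpZ4 : bbpZ ^ 4 = -(1/4 : ℂ) := by
  rw [bbpZ]; linear_combination ((I^2+4*I+5)/16) * Complex.I_sq

private lemma bbpZ8 : bbpZ ^ 8 = (((1:ℝ)/16 : ℝ) : ℂ) := by
  rw [show bbpZ ^ 8 = (bbpZ ^ 4) ^ 2 by ring, bbpZ4]
  push_cast; norm_num

private lemma bbpZ3 : bbpZ ^ 3 = (-1 + I)/4 := by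
  rw [bbpZ]; linear_combination ((I+3)/8) * Complex.I_sq
private lemma bbpZ2 : bbpZ ^ 2 = I/2 := by
  rw [bbpZ]; linear_combination ((1:ℂ)/4) * Complex.I_sq
private lemma bbpZ5 : bbpZ ^ 5 = -((1+I)/8) := by
  rw [bbpZ]; linear_combination ((I^3+5*I^2+9*I+5)/32) * Complex.I_sq
private lemma bbpZ6 : bbpZ ^ 6 = -(I/8) := by
  rw [bbpZ]; linear_combination ((I^4+6*I^3+14*I^2+14*I+1)/64) * Complex.I_sq
private lemma bbpZ7 : bbpZ ^ 7 = (1 - I)/16 := by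
  rw [bbpZ]; linear_combination ((I^5+7*I^4+20*I^3+28*I^2+15*I-7)/128) * Complex.I_sq

private lemma bbpT_lt : |bbpT| < 1 := by
  rw [bbpT, _root_.abs_of_nonneg (by positivity)]
  rw [div_lt_one (by norm_num)]
  exact (Real.sqrt_lt' (by norm_num)).2 (by norm_num)

private lemma bbpZ_norm : ‖bbpZ‖ ^ 2 = 1/2 := by
  rw [Complex.sq_norm, bbpZ]
  simp [Complex.normSq_apply]
  norm_num

-- The key analytic fact: HasSum bbpF 0
private lemma bbpF_hasSum : HasSum bbpF 0 := by
  have htn : ‖((bbpT : ℝ) : ℂ)‖ < 1 := by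
    rw [Complex.norm_real]; exact bbpT_lt
  have hzn : ‖bbpZ‖ < 1 := by
    nlinarith [norm_nonneg bbpZ, bbpZ_norm]
  have hzcn : ‖(starRingEnd ℂ) bbpZ‖ < 1 := by rwa [RCLike.norm_conj]
  have h1 := Complex.hasSum_taylorSeries_neg_log htn
  have h2 := Complex.hasSum_taylorSeries_neg_log (z := -((bbpT : ℝ) : ℂ))
    (by rwa [norm_neg])
  have h3 := Complex.hasSum_taylorSeries_neg_log hzn
  have h4 := Complex.hasSum_taylorSeries_neg_log hzcn
  have H := (((h1.mul_left 8).add (h2.mul_left 8)).sub (h3.mul_left 8)).sub (h4.mul_left 8)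
  have heq : (fun n : ℕ => 8 * (((bbpT : ℝ):ℂ) ^ n / n) + 8 * ((-((bbpT : ℝ):ℂ)) ^ n / n)
      - 8 * (bbpZ ^ n / n) - 8 * (((starRingEnd ℂ) bbpZ) ^ n / n))
      = fun n : ℕ => ((bbpF n : ℝ) : ℂ) := by
    funext n
    rw [← map_pow, bbpF]
    have hc : bbpZ ^ n + (starRingEnd ℂ) (bbpZ ^ n) = 2 * (((bbpZ ^ n).re : ℝ) : ℂ) := by
      rw [Complex.add_conj]; push_cast; ring
    push_cast
    linear_combination (-8 / (n:ℂ)) * hc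
  rw [heq] at H
  have hval : 8 * -Complex.log (1 - ((bbpT : ℝ):ℂ)) + 8 * -Complex.log (1 - -((bbpT : ℝ):ℂ))
      - 8 * -Complex.log (1 - bbpZ) - 8 * -Complex.log (1 - (starRingEnd ℂ) bbpZ)
      = (((0:ℝ)) : ℂ) := by
    have e1 : (1 : ℂ) - ((bbpT : ℝ):ℂ) = (((1 - bbpT : ℝ)) : ℂ) := by push_cast; ring
    have e2 : (1 : ℂ) - -((bbpT : ℝ):ℂ) = (((1 + bbpT : ℝ)) : ℂ) := by push_cast; ring
    have e3 : (1 : ℂ) - (starRingEnd ℂ) bbpZ = (starRingEnd ℂ) (1 - bbpZ) := by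
      rw [map_sub, map_one]
    have ht1 : (0:ℝ) < 1 - bbpT := by
      have := bbpT_lt; rw [abs_lt] at this; linarith [this.2]
    have ht2 : (0:ℝ) < 1 + bbpT := by
      have := bbpT_lt; rw [abs_lt] at this; linarith [this.1]
    rw [e1, e2, e3, ← Complex.ofReal_log ht1.le, ← Complex.ofReal_log ht2.le]
    have harg : (1 - bbpZ).arg ≠ Real.pi := by
      rw [Ne, Complex.arg_eq_pi_iff]
      push_neg
      intro h
      exfalso
      have h5 : (1 - bbpZ).re = 1/2 := by
        rw [bbpZ]; simp [Complex.div_re]; norm_num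
      rw [h5] at h; norm_num at h
    rw [Complex.log_conj _ harg]
    have hlc : Complex.log (1 - bbpZ) + (starRingEnd ℂ) (Complex.log (1 - bbpZ))
        = 2 * (((Complex.log (1 - bbpZ)).re : ℝ) : ℂ) := by
      rw [Complex.add_conj]; push_cast; ring
    have hlog2 : Real.log (1 - bbpT) + Real.log (1 + bbpT) = -Real.log 2 := by
      rw [← Real.log_mul ht1.ne' ht2.ne']
      have : (1 - bbpT) * (1 + bbpT) = 1/2 := by
        have := bbpT2; nlinarith [this]
      rw [this]
      rw [show (1:ℝ)/2 = 2⁻¹ by norm_num, Real.log_inv]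
    have habs : ‖1 - bbpZ‖ = Real.sqrt (1/2) := by
      have hsq : ‖1 - bbpZ‖ ^ 2 = 1/2 := by
        rw [Complex.sq_norm, bbpZ]
        simp [Complex.normSq_apply]
        norm_num
      rw [← Real.sqrt_sq (norm_nonneg _), hsq]
    have hre : (Complex.log (1 - bbpZ)).re = -Real.log 2 / 2 := by
      rw [Complex.log_re, habs, Real.log_sqrt (by norm_num)]
      rw [show (1:ℝ)/2 = 2⁻¹ by norm_num, Real.log_inv]
    rw [hre] at hlc
    have hcast : ((Real.log (1 - bbpT) : ℝ) : ℂ) + ((Real.log (1 + bbpT) : ℝ) : ℂ)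
        = -((Real.log 2 : ℝ) : ℂ) := by exact_mod_cast congrArg (fun r : ℝ => ((r : ℝ) : ℂ)) hlog2
    push_cast at hlc hcast ⊢
    linear_combination (-8 : ℂ) * hcast + 8 * hlc
  rw [hval] at H
  exact Complex.hasSum_ofReal.mp H

private lemma bbpZre : bbpZ.re = 1/2 := by
  rw [bbpZ]; simp [Complex.div_re]


private lemma bbpR1 : (bbpZ^1).re = 1/2 := by rw [pow_one, bbpZre]
private lemma bbpR2 : (bbpZ^2).re = 0 := by rw [bbpZ2]; simp
private lemma bbpR3 : (bbpZ^3).re = -(1/4) := by rw [bbpZ3]; simp; all_goals norm_num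
private lemma bbpR4 : (bbpZ^4).re = -(1/4) := by rw [bbpZ4]; norm_num
private lemma bbpR5 : (bbpZ^5).re = -(1/8) := by rw [bbpZ5]; simp
private lemma bbpR6 : (bbpZ^6).re = 0 := by rw [bbpZ6]; simp
private lemma bbpR7 : (bbpZ^7).re = 1/16 := by rw [bbpZ7]; simp

private lemma bbp_block (k : ℕ) :
    ∑ j : Fin 8, bbpF (k * 8 + (j : ℕ)) =
    (1 / (16 : ℝ) ^ k) *
      (-8 / (8 * (k : ℝ) + 1) + 8 / (8 * (k : ℝ) + 2) + 4 / (8 * (k : ℝ) + 3)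
        + 8 / (8 * (k : ℝ) + 4) + 2 / (8 * (k : ℝ) + 5) + 2 / (8 * (k : ℝ) + 6)
        - 1 / (8 * (k : ℝ) + 7)) := by
  have hto : ∀ j : ℕ, bbpT ^ (k*8+j) = (1/16 : ℝ)^k * bbpT ^ j := fun j => by
    rw [pow_add, mul_comm k 8, pow_mul, bbpT8]
  have hnt8 : (-bbpT) ^ 8 = 1/16 := by
    rw [Even.neg_pow (⟨4, by norm_num⟩ : Even 8)]; exact bbpT8
  have hnto : ∀ j : ℕ, (-bbpT) ^ (k*8+j) = (1/16 : ℝ)^k * (-bbpT) ^ j := fun j => by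
    rw [pow_add, mul_comm k 8, pow_mul, hnt8]
  have hzo : ∀ j : ℕ, (bbpZ ^ (k*8+j)).re = (1/16:ℝ)^k * (bbpZ ^ j).re := fun j => by
    rw [pow_add, mul_comm k 8, pow_mul, bbpZ8, ← Complex.ofReal_pow, Complex.re_ofReal_mul]
  have h16 : (16:ℝ)^k ≠ 0 := by positivity
  have h16' : (1/16:ℝ)^k * 16^k = 1 := by rw [← mul_pow]; norm_num
  have ht4 : bbpT ^ 4 = 1/4 := by
    rw [show bbpT^4 = (bbpT^2)^2 by ring, bbpT2]; norm_num
  have ht6 : bbpT ^ 6 = 1/8 := by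
    rw [show bbpT^6 = (bbpT^2)^3 by ring, bbpT2]; norm_num
  have h0 : bbpF (k*8 + 0) = 0 := by
    rw [bbpF, hto 0, hnto 0, hzo 0,
      show 8*((1/16:ℝ)^k * bbpT^0) + 8*((1/16:ℝ)^k * (-bbpT)^0)
        - 16*((1/16:ℝ)^k * ((bbpZ:ℂ)^0).re) = 0 by simp; ring, zero_div]
  have h1 : bbpF (k*8 + 1) = (1/(16:ℝ)^k) * (-8/(8*(k:ℝ)+1)) := by
    have hd : 8*(k:ℝ)+1 ≠ 0 := by positivity
    rw [bbpF, hto 1, hnto 1, hzo 1, bbpR1, Odd.neg_pow (⟨0, by norm_num⟩ : Odd 1)]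
    push_cast
    field_simp
    linear_combination (-16:ℝ) * h16'
  have h2 : bbpF (k*8 + 2) = (1/(16:ℝ)^k) * (8/(8*(k:ℝ)+2)) := by
    have hd : 8*(k:ℝ)+2 ≠ 0 := by positivity
    rw [bbpF, hto 2, hnto 2, hzo 2, bbpR2, Even.neg_pow (⟨1, by norm_num⟩ : Even 2), bbpT2]
    push_cast
    field_simp
    linear_combination (16:ℝ) * h16'
  have h3 : bbpF (k*8 + 3) = (1/(16:ℝ)^k) * (4/(8*(k:ℝ)+3)) := by
    have hd : 8*(k:ℝ)+3 ≠ 0 := by positivity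
    rw [bbpF, hto 3, hnto 3, hzo 3, bbpR3, Odd.neg_pow (⟨1, by norm_num⟩ : Odd 3)]
    push_cast
    field_simp
    linear_combination (16:ℝ) * h16'
  have h4 : bbpF (k*8 + 4) = (1/(16:ℝ)^k) * (8/(8*(k:ℝ)+4)) := by
    have hd : 8*(k:ℝ)+4 ≠ 0 := by positivity
    rw [bbpF, hto 4, hnto 4, hzo 4, bbpR4, Even.neg_pow (⟨2, by norm_num⟩ : Even 4), ht4]
    push_cast
    field_simp
    linear_combination (32:ℝ) * h16'
  have h5 : bbpF (k*8 + 5) = (1/(16:ℝ)^k) * (2/(8*(k:ℝ)+5)) := by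
    have hd : 8*(k:ℝ)+5 ≠ 0 := by positivity
    rw [bbpF, hto 5, hnto 5, hzo 5, bbpR5, Odd.neg_pow (⟨2, by norm_num⟩ : Odd 5)]
    push_cast
    field_simp
    linear_combination (16:ℝ) * h16'
  have h6 : bbpF (k*8 + 6) = (1/(16:ℝ)^k) * (2/(8*(k:ℝ)+6)) := by
    have hd : 8*(k:ℝ)+6 ≠ 0 := by positivity
    rw [bbpF, hto 6, hnto 6, hzo 6, bbpR6, Even.neg_pow (⟨3, by norm_num⟩ : Even 6), ht6]
    push_cast
    field_simp
    linear_combination (2:ℝ) * h16'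
  have h7 : bbpF (k*8 + 7) = (1/(16:ℝ)^k) * (-1/(8*(k:ℝ)+7)) := by
    have hd : 8*(k:ℝ)+7 ≠ 0 := by positivity
    rw [bbpF, hto 7, hnto 7, hzo 7, bbpR7, Odd.neg_pow (⟨3, by norm_num⟩ : Odd 7)]
    push_cast
    field_simp
    linear_combination (-1:ℝ) * h16'
  rw [Fin.sum_univ_eight]
  simp only [show ((0:Fin 8):ℕ) = 0 from rfl, show ((1:Fin 8):ℕ) = 1 from rfl,
    show ((2:Fin 8):ℕ) = 2 from rfl, show ((3:Fin 8):ℕ) = 3 from rfl,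
    show ((4:Fin 8):ℕ) = 4 from rfl, show ((5:Fin 8):ℕ) = 5 from rfl,
    show ((6:Fin 8):ℕ) = 6 from rfl, show ((7:Fin 8):ℕ) = 7 from rfl,
    h0, h1, h2, h3, h4, h5, h6, h7]
  ring

theorem statement15 :
    HasSum (fun k : ℕ => (1 / (16 : ℝ) ^ k) *
      (-8 / (8 * (k : ℝ) + 1) + 8 / (8 * (k : ℝ) + 2) + 4 / (8 * (k : ℝ) + 3)
        + 8 / (8 * (k : ℝ) + 4) + 2 / (8 * (k : ℝ) + 5) + 2 / (8 * (k : ℝ) + 6)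
        - 1 / (8 * (k : ℝ) + 7))) 0 := by
  have hF2 : HasSum (fun p : ℕ × Fin 8 => bbpF (p.1 * 8 + (p.2 : ℕ))) 0 :=
    ((Nat.divModEquiv 8).symm.hasSum_iff).mpr bbpF_hasSum
  refine hF2.prod_fiberwise (fun k => ?_)
  have h := hasSum_fintype (fun j : Fin 8 => bbpF (k * 8 + (j : ℕ)))
  rwa [bbp_block k] at h
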